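/- arXiv:0912.1320 — 3 statements merged into one kernel-verified Lean document; each statement's English description precedes it below -/
import Mathlib

section
/- The assignment *: aΔ → aΔ fixing objects, sending α_i ↦ β_i, β_i ↦ α_i, τ ↦ τ^{-1}, δ_± ↦ δ_±, and reversing words, is a well-defined involution on aΔ; in particular it preserves all defining relations of aΔ, so aΔ ≅ aΔ^op. -/
open CategoryTheory

namespace AnnularCat

/-- Objects of the annular category `aΔ`: `pos n` stands for `[n+1]` (`n : ℕ`), and
`zp`, `zm` stand for `[0+]` and `[0-]`. -/
inductive AObj : Type
  | zp : AObj
  | zm : AObj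
  | pos (n : ℕ) : AObj

open AObj

/-- Generators of `aΔ`: `α n i : [n+2] → [n+1]` (`1 ≤ i ≤ 2(n+2)`), with
`a1 : [1] → [0+]`, `a2 : [1] → [0-]`; `β n i : [n+1] → [n+2]` (`1 ≤ i ≤ 2(n+1)+2`), with
`b1 : [0+] → [1]`, `b2 : [0-] → [1]`; the rotation `τ n : [n+1] → [n+1]`; and the
coupling constants `δ₊, δ₋` at every object. -/
inductive AGen : AObj → AObj → Type
  | a1 : AGen (pos 0) zp
  | a2 : AGen (pos 0) zm
  | α (n i : ℕ) (h1 : 1 ≤ i) (h2 : i ≤ 2 * n + 4) : AGen (pos (n + 1)) (pos n)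
  | b1 : AGen zp (pos 0)
  | b2 : AGen zm (pos 0)
  | β (n i : ℕ) (h1 : 1 ≤ i) (h2 : i ≤ 2 * n + 4) : AGen (pos n) (pos (n + 1))
  | τ (n : ℕ) : AGen (pos n) (pos n)
  | δp (X : AObj) : AGen X X
  | δm (X : AObj) : AGen X X

instance : Quiver AObj := ⟨AGen⟩

abbrev APath := Paths AObj

def po (n : ℕ) : APath := (Paths.of AObj).obj (pos n)
def pzp : APath := (Paths.of AObj).obj zp
def pzm : APath := (Paths.of AObj).obj zm

def pα (n i : ℕ) (h1 : 1 ≤ i) (h2 : i ≤ 2 * n + 4) : po (n + 1) ⟶ po n :=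
  Quiver.Hom.toPath (AGen.α n i h1 h2)
def pa1 : po 0 ⟶ pzp := Quiver.Hom.toPath AGen.a1
def pa2 : po 0 ⟶ pzm := Quiver.Hom.toPath AGen.a2
def pβ (n i : ℕ) (h1 : 1 ≤ i) (h2 : i ≤ 2 * n + 4) : po n ⟶ po (n + 1) :=
  Quiver.Hom.toPath (AGen.β n i h1 h2)
def pb1 : pzp ⟶ po 0 := Quiver.Hom.toPath AGen.b1
def pb2 : pzm ⟶ po 0 := Quiver.Hom.toPath AGen.b2
def pτ (n : ℕ) : po n ⟶ po n := Quiver.Hom.toPath (AGen.τ n)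
def pδp (X : AObj) : (Paths.of AObj).obj X ⟶ (Paths.of AObj).obj X := Quiver.Hom.toPath (AGen.δp X)
def pδm (X : AObj) : (Paths.of AObj).obj X ⟶ (Paths.of AObj).obj X := Quiver.Hom.toPath (AGen.δm X)

def pτpow (n : ℕ) : ℕ → (po n ⟶ po n)
  | 0 => 𝟙 _
  | k + 1 => pτpow n k ≫ pτ n

/-- The defining relations (1)-(7) of the annular category `aΔ`. Composition is written
left-to-right, so the word `α_i α_j` (applying `α_j` first) is `pα _ j _ _ ≫ pα _ i _ _`.
The object `[n]` of the paper is `pos (n-1)` here, so on `[n]` the paper bound `2n+2`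
for `β`-indices and the bound `2(n+1)` for `α`-indices out of `[n+1]` both read
`2 * m + 4` for `[n] = pos m`. -/
inductive ARel : ∀ {X Y : APath}, (X ⟶ Y) → (X ⟶ Y) → Prop
  -- (1)  α_i α_j = α_{j-2} α_i  for i < j-1, (i,j) ≠ (1, 2n)
  | αα (n i j : ℕ) (h1 : 1 ≤ i) (hij : i < j - 1) (hj : j ≤ 2 * n + 6)
      (hne : ¬(i = 1 ∧ j = 2 * n + 6)) :
      ARel (pα (n + 1) j (by omega) (by omega) ≫ pα n i (by omega) (by omega))
           (pα (n + 1) i (by omega) (by omega) ≫ pα n (j - 2) (by omega) (by omega))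
  | αα1 : ARel (pα 0 3 (by omega) (by omega) ≫ pa1) (pα 0 1 (by omega) (by omega) ≫ pa1)
  | αα2 : ARel (pα 0 4 (by omega) (by omega) ≫ pa2) (pα 0 2 (by omega) (by omega) ≫ pa2)
  -- (2)  β_i β_j = β_{j+2} β_i  for i ≤ j, (i,j) ≠ (1, 2n+2)
  | ββ (n i j : ℕ) (h1 : 1 ≤ i) (hij : i ≤ j) (hj : j ≤ 2 * n + 4)
      (hne : ¬(i = 1 ∧ j = 2 * n + 4)) :
      ARel (pβ n j (by omega) (by omega) ≫ pβ (n + 1) i (by omega) (by omega))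
           (pβ n i (by omega) (by omega) ≫ pβ (n + 1) (j + 2) (by omega) (by omega))
  | ββ1 : ARel (pb1 ≫ pβ 0 1 (by omega) (by omega)) (pb1 ≫ pβ 0 3 (by omega) (by omega))
  | ββ2 : ARel (pb2 ≫ pβ 0 2 (by omega) (by omega)) (pb2 ≫ pβ 0 4 (by omega) (by omega))
  -- (3)  τ^n = id on [n]
  | τpow (n : ℕ) : ARel (pτpow n (n + 1)) (𝟙 (po n))
  -- (4)  α_i τ = τ α_{i-2}  for i ≥ 3
  | ατ (n i : ℕ) (h1 : 3 ≤ i) (h2 : i ≤ 2 * n + 4) :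
      ARel (pτ (n + 1) ≫ pα n i (by omega) (by omega))
           (pα n (i - 2) (by omega) (by omega) ≫ pτ n)
  -- (5)  β_i τ = τ β_{i-2}  for i ≥ 3
  | βτ (n i : ℕ) (h1 : 3 ≤ i) (h2 : i ≤ 2 * n + 4) :
      ARel (pτ n ≫ pβ n i (by omega) (by omega))
           (pβ n (i - 2) (by omega) (by omega) ≫ pτ (n + 1))
  -- (6)  δ₊ = α_1 β_1 on [0+], δ₋ = α_2 β_2 on [0-], and the α_i β_j relations
  | δp0 : ARel (pb1 ≫ pa1) (pδp zp)
  | δm0 : ARel (pb2 ≫ pa2) (pδm zm)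
  | αβ_τinv (n : ℕ) :
      ARel (pβ n (2 * n + 4) (by omega) (by omega) ≫ pα n 1 (by omega) (by omega))
           (pτpow n n)
  | αβ_lt (n i j : ℕ) (h1 : 1 ≤ i) (hij : i < j - 1) (hj : j ≤ 2 * n + 6)
      (hne : ¬(i = 1 ∧ j = 2 * n + 6)) :
      ARel (pβ (n + 1) j (by omega) (by omega) ≫ pα (n + 1) i (by omega) (by omega))
           (pα n i (by omega) (by omega) ≫ pβ n (j - 2) (by omega) (by omega))
  | αβ_lt1 : ARel (pβ 0 3 (by omega) (by omega) ≫ pα 0 1 (by omega) (by omega)) (pa1 ≫ pb1)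
  | αβ_lt2 : ARel (pβ 0 4 (by omega) (by omega) ≫ pα 0 2 (by omega) (by omega)) (pa2 ≫ pb2)
  | αβ_id1 (n i : ℕ) (h1 : 1 ≤ i) (h2 : i + 1 ≤ 2 * n + 4) :
      ARel (pβ n (i + 1) (by omega) (by omega) ≫ pα n i (by omega) (by omega)) (𝟙 (po n))
  | αβ_id2 (n j : ℕ) (h1 : 1 ≤ j) (h2 : j + 1 ≤ 2 * n + 4) :
      ARel (pβ n j (by omega) (by omega) ≫ pα n (j + 1) (by omega) (by omega)) (𝟙 (po n))
  | αβ_δp (n i : ℕ) (h1 : 1 ≤ i) (h2 : i ≤ 2 * n + 4) (hodd : i % 2 = 1) :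
      ARel (pβ n i (by omega) (by omega) ≫ pα n i (by omega) (by omega)) (pδp (pos n))
  | αβ_δm (n i : ℕ) (h1 : 1 ≤ i) (h2 : i ≤ 2 * n + 4) (heven : i % 2 = 0) :
      ARel (pβ n i (by omega) (by omega) ≫ pα n i (by omega) (by omega)) (pδm (pos n))
  | αβ_gt (n i j : ℕ) (h1 : 1 ≤ j) (hij : j + 1 < i) (hi : i ≤ 2 * n + 6)
      (hne : ¬(i = 2 * n + 6 ∧ j = 1)) :
      ARel (pβ (n + 1) j (by omega) (by omega) ≫ pα (n + 1) i (by omega) (by omega))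
           (pα n (i - 2) (by omega) (by omega) ≫ pβ n j (by omega) (by omega))
  | αβ_gt1 : ARel (pβ 0 1 (by omega) (by omega) ≫ pα 0 3 (by omega) (by omega)) (pa1 ≫ pb1)
  | αβ_gt2 : ARel (pβ 0 2 (by omega) (by omega) ≫ pα 0 4 (by omega) (by omega)) (pa2 ≫ pb2)
  | αβ_τ (n : ℕ) :
      ARel (pβ n 1 (by omega) (by omega) ≫ pα n (2 * n + 4) (by omega) (by omega)) (pτ n)
  -- (7)  δ₊ and δ₋ commute with all generators
  | δp_comm {X Y : AObj} (g : AGen X Y) :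
      ARel (pδp X ≫ Quiver.Hom.toPath g) (Quiver.Hom.toPath g ≫ pδp Y)
  | δm_comm {X Y : AObj} (g : AGen X Y) :
      ARel (pδm X ≫ Quiver.Hom.toPath g) (Quiver.Hom.toPath g ≫ pδm Y)

def arel : HomRel APath := @fun _ _ f g => ARel f g

/-- The annular category `aΔ ≅ Atl`, presented by generators and relations. -/
abbrev Ann := CategoryTheory.Quotient arel

/-- The object `[n+1]` of `aΔ`. -/
def qo (n : ℕ) : Ann := (Quotient.functor arel).obj (po n)
/-- The object `[0+]` of `aΔ`. -/
def qzp : Ann := (Quotient.functor arel).obj pzp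
/-- The object `[0-]` of `aΔ`. -/
def qzm : Ann := (Quotient.functor arel).obj pzm

/-- `α_i : [n+2] → [n+1]`, for `1 ≤ i ≤ 2(n+2)`. -/
def A (n i : ℕ) (h1 : 1 ≤ i) (h2 : i ≤ 2 * n + 4) : qo (n + 1) ⟶ qo n :=
  (Quotient.functor arel).map (pα n i h1 h2)
/-- `α_1 : [1] → [0+]`. -/
def A1 : qo 0 ⟶ qzp := (Quotient.functor arel).map pa1
/-- `α_2 : [1] → [0-]`. -/
def A2 : qo 0 ⟶ qzm := (Quotient.functor arel).map pa2
/-- `β_i : [n+1] → [n+2]`, for `1 ≤ i ≤ 2(n+1)+2`. -/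
def B (n i : ℕ) (h1 : 1 ≤ i) (h2 : i ≤ 2 * n + 4) : qo n ⟶ qo (n + 1) :=
  (Quotient.functor arel).map (pβ n i h1 h2)
/-- `β_1 : [0+] → [1]`. -/
def B1 : qzp ⟶ qo 0 := (Quotient.functor arel).map pb1
/-- `β_2 : [0-] → [1]`. -/
def B2 : qzm ⟶ qo 0 := (Quotient.functor arel).map pb2
/-- The rotation `τ : [n+1] → [n+1]`. -/
def T (n : ℕ) : qo n ⟶ qo n := (Quotient.functor arel).map (pτ n)
/-- `τ^k : [n+1] → [n+1]`. -/
def Tpow (n k : ℕ) : qo n ⟶ qo n := (Quotient.functor arel).map (pτpow n k)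
/-- The coupling constant `δ₊` at an object. -/
def Dp (X : AObj) : (Quotient.functor arel).obj ((Paths.of AObj).obj X) ⟶
    (Quotient.functor arel).obj ((Paths.of AObj).obj X) := (Quotient.functor arel).map (pδp X)
/-- The coupling constant `δ₋` at an object. -/
def Dm (X : AObj) : (Quotient.functor arel).obj ((Paths.of AObj).obj X) ⟶
    (Quotient.functor arel).obj ((Paths.of AObj).obj X) := (Quotient.functor arel).map (pδm X)

end AnnularCat

open AnnularCat

namespace AnnularCat


/-! ### Basic lemmas about powers of `τ` in `aΔ` -/

lemma pτpow_add (n a b : ℕ) : pτpow n (a + b) = pτpow n a ≫ pτpow n b := by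
  induction b with
  | zero => exact (Category.comp_id _).symm
  | succ b ih =>
    show pτpow n ((a + b) + 1) = _
    rw [pτpow, ih, pτpow, Category.assoc]

lemma Tpow_zero (n : ℕ) : Tpow n 0 = 𝟙 (qo n) := (Quotient.functor arel).map_id _

lemma Tpow_succ (n k : ℕ) : Tpow n (k + 1) = Tpow n k ≫ T n := by
  show (Quotient.functor arel).map (pτpow n k ≫ pτ n) = _
  rw [Functor.map_comp]; rfl

lemma Tpow_add (n a b : ℕ) : Tpow n (a + b) = Tpow n a ≫ Tpow n b := by
  show (Quotient.functor arel).map (pτpow n (a + b)) = _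
  rw [pτpow_add, Functor.map_comp]; rfl

lemma Tpow_one (n : ℕ) : Tpow n 1 = T n := by
  rw [show (1 : ℕ) = 0 + 1 from rfl, Tpow_succ, Tpow_zero, Category.id_comp]

lemma Tpow_period (n : ℕ) : Tpow n (n + 1) = 𝟙 (qo n) := by
  have h := CategoryTheory.Quotient.sound arel (ARel.τpow n)
  rw [(Quotient.functor arel).map_id] at h
  exact h

lemma Tpow_mul_period (n m : ℕ) : Tpow n (m * (n + 1)) = 𝟙 (qo n) := by
  induction m with
  | zero => rw [Nat.zero_mul]; exact Tpow_zero n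
  | succ m ih => rw [Nat.succ_mul, Tpow_add, ih, Tpow_period, Category.comp_id]

lemma Tpow_congr (n : ℕ) {a b : ℕ} (e : a = b) : Tpow n a = Tpow n b := by rw [e]

lemma Tnn (n : ℕ) : Tpow n (n * n) = T n := by
  cases n with
  | zero =>
    rw [show 0 * 0 = 0 from rfl, Tpow_zero, ← Tpow_one]
    exact (Tpow_period 0).symm
  | succ m =>
    rw [Tpow_congr _ (show (m+1) * (m+1) = 1 + m * ((m+1) + 1) by ring), Tpow_add,
      Tpow_mul_period, Category.comp_id, Tpow_one]

lemma cancel_T_right {X : Ann} {n : ℕ} {f g : X ⟶ qo n}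
    (h : f ≫ T n = g ≫ T n) : f = g := by
  have hf : ∀ u : X ⟶ qo n, (u ≫ T n) ≫ Tpow n n = u := by
    intro u
    rw [Category.assoc, ← Tpow_one, ← Tpow_add, Tpow_congr _ (Nat.add_comm 1 n),
      Tpow_period, Category.comp_id]
  rw [← hf f, ← hf g, h]

/-! ### Images of the defining relations in `aΔ`, with flexible indices -/

lemma rαα {n i j j' : ℕ} (h1 : 1 ≤ i) (hij : i < j - 1) (hj : j ≤ 2 * n + 6)
    (hne : ¬(i = 1 ∧ j = 2 * n + 6)) (ej : j' = j - 2)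
    {p1 p2 p3 p4 p5 p6 p7 p8} :
    A (n + 1) j p1 p2 ≫ A n i p3 p4 = A (n + 1) i p5 p6 ≫ A n j' p7 p8 := by
  subst ej
  have h := CategoryTheory.Quotient.sound arel (ARel.αα n i j h1 hij hj hne)
  rw [Functor.map_comp, Functor.map_comp] at h
  exact h

lemma rαα1 {p1 p2 p3 p4} : A 0 3 p1 p2 ≫ A1 = A 0 1 p3 p4 ≫ A1 := by
  have h := CategoryTheory.Quotient.sound arel ARel.αα1
  rw [Functor.map_comp, Functor.map_comp] at h
  exact h

lemma rαα2 {p1 p2 p3 p4} : A 0 4 p1 p2 ≫ A2 = A 0 2 p3 p4 ≫ A2 := by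
  have h := CategoryTheory.Quotient.sound arel ARel.αα2
  rw [Functor.map_comp, Functor.map_comp] at h
  exact h

lemma rββ {n i j j' : ℕ} (h1 : 1 ≤ i) (hij : i ≤ j) (hj : j ≤ 2 * n + 4)
    (hne : ¬(i = 1 ∧ j = 2 * n + 4)) (ej : j' = j + 2)
    {p1 p2 p3 p4 p5 p6 p7 p8} :
    B n j p1 p2 ≫ B (n + 1) i p3 p4 = B n i p5 p6 ≫ B (n + 1) j' p7 p8 := by
  subst ej
  have h := CategoryTheory.Quotient.sound arel (ARel.ββ n i j h1 hij hj hne)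
  rw [Functor.map_comp, Functor.map_comp] at h
  exact h

lemma rββ1 {p1 p2 p3 p4} : B1 ≫ B 0 1 p1 p2 = B1 ≫ B 0 3 p3 p4 := by
  have h := CategoryTheory.Quotient.sound arel ARel.ββ1
  rw [Functor.map_comp, Functor.map_comp] at h
  exact h

lemma rββ2 {p1 p2 p3 p4} : B2 ≫ B 0 2 p1 p2 = B2 ≫ B 0 4 p3 p4 := by
  have h := CategoryTheory.Quotient.sound arel ARel.ββ2
  rw [Functor.map_comp, Functor.map_comp] at h
  exact h

lemma rατ {n i i' : ℕ} (h1 : 3 ≤ i) (h2 : i ≤ 2 * n + 4) (ei : i' = i - 2)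
    {p1 p2 p3 p4} :
    T (n + 1) ≫ A n i p1 p2 = A n i' p3 p4 ≫ T n := by
  subst ei
  have h := CategoryTheory.Quotient.sound arel (ARel.ατ n i h1 h2)
  rw [Functor.map_comp, Functor.map_comp] at h
  exact h

lemma rβτ {n i i' : ℕ} (h1 : 3 ≤ i) (h2 : i ≤ 2 * n + 4) (ei : i' = i - 2)
    {p1 p2 p3 p4} :
    T n ≫ B n i p1 p2 = B n i' p3 p4 ≫ T (n + 1) := by
  subst ei
  have h := CategoryTheory.Quotient.sound arel (ARel.βτ n i h1 h2)
  rw [Functor.map_comp, Functor.map_comp] at h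
  exact h

lemma rδp0 : B1 ≫ A1 = Dp AObj.zp := by
  have h := CategoryTheory.Quotient.sound arel ARel.δp0
  rw [Functor.map_comp] at h
  exact h

lemma rδm0 : B2 ≫ A2 = Dm AObj.zm := by
  have h := CategoryTheory.Quotient.sound arel ARel.δm0
  rw [Functor.map_comp] at h
  exact h

lemma rαβτinv (n : ℕ) {p1 p2 p3 p4} :
    B n (2 * n + 4) p1 p2 ≫ A n 1 p3 p4 = Tpow n n := by
  have h := CategoryTheory.Quotient.sound arel (ARel.αβ_τinv n)
  rw [Functor.map_comp] at h
  exact h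

lemma rαβτ (n : ℕ) {p1 p2 p3 p4} :
    B n 1 p1 p2 ≫ A n (2 * n + 4) p3 p4 = T n := by
  have h := CategoryTheory.Quotient.sound arel (ARel.αβ_τ n)
  rw [Functor.map_comp] at h
  exact h

lemma rαβlt {n i j j' : ℕ} (h1 : 1 ≤ i) (hij : i < j - 1) (hj : j ≤ 2 * n + 6)
    (hne : ¬(i = 1 ∧ j = 2 * n + 6)) (ej : j' = j - 2)
    {p1 p2 p3 p4 p5 p6 p7 p8} :
    B (n + 1) j p1 p2 ≫ A (n + 1) i p3 p4 = A n i p5 p6 ≫ B n j' p7 p8 := by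
  subst ej
  have h := CategoryTheory.Quotient.sound arel (ARel.αβ_lt n i j h1 hij hj hne)
  rw [Functor.map_comp, Functor.map_comp] at h
  exact h

lemma rαβlt1 {p1 p2 p3 p4} : B 0 3 p1 p2 ≫ A 0 1 p3 p4 = A1 ≫ B1 := by
  have h := CategoryTheory.Quotient.sound arel ARel.αβ_lt1
  rw [Functor.map_comp, Functor.map_comp] at h
  exact h

lemma rαβlt2 {p1 p2 p3 p4} : B 0 4 p1 p2 ≫ A 0 2 p3 p4 = A2 ≫ B2 := by
  have h := CategoryTheory.Quotient.sound arel ARel.αβ_lt2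
  rw [Functor.map_comp, Functor.map_comp] at h
  exact h

lemma rαβgt {n i j i' : ℕ} (h1 : 1 ≤ j) (hij : j + 1 < i) (hi : i ≤ 2 * n + 6)
    (hne : ¬(i = 2 * n + 6 ∧ j = 1)) (ei : i' = i - 2)
    {p1 p2 p3 p4 p5 p6 p7 p8} :
    B (n + 1) j p1 p2 ≫ A (n + 1) i p3 p4 = A n i' p5 p6 ≫ B n j p7 p8 := by
  subst ei
  have h := CategoryTheory.Quotient.sound arel (ARel.αβ_gt n i j h1 hij hi hne)
  rw [Functor.map_comp, Functor.map_comp] at h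
  exact h

lemma rαβgt1 {p1 p2 p3 p4} : B 0 1 p1 p2 ≫ A 0 3 p3 p4 = A1 ≫ B1 := by
  have h := CategoryTheory.Quotient.sound arel ARel.αβ_gt1
  rw [Functor.map_comp, Functor.map_comp] at h
  exact h

lemma rαβgt2 {p1 p2 p3 p4} : B 0 2 p1 p2 ≫ A 0 4 p3 p4 = A2 ≫ B2 := by
  have h := CategoryTheory.Quotient.sound arel ARel.αβ_gt2
  rw [Functor.map_comp, Functor.map_comp] at h
  exact h

lemma rαβid1 {n i i' : ℕ} (h1 : 1 ≤ i) (h2 : i + 1 ≤ 2 * n + 4) (e : i' = i + 1)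
    {p1 p2 p3 p4} :
    B n i' p1 p2 ≫ A n i p3 p4 = 𝟙 (qo n) := by
  subst e
  have h := CategoryTheory.Quotient.sound arel (ARel.αβ_id1 n i h1 h2)
  rw [Functor.map_comp, (Quotient.functor arel).map_id] at h
  exact h

lemma rαβid2 {n j j' : ℕ} (h1 : 1 ≤ j) (h2 : j + 1 ≤ 2 * n + 4) (e : j' = j + 1)
    {p1 p2 p3 p4} :
    B n j p1 p2 ≫ A n j' p3 p4 = 𝟙 (qo n) := by
  subst e
  have h := CategoryTheory.Quotient.sound arel (ARel.αβ_id2 n j h1 h2)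
  rw [Functor.map_comp, (Quotient.functor arel).map_id] at h
  exact h

lemma rαβδp {n i : ℕ} (h1 : 1 ≤ i) (h2 : i ≤ 2 * n + 4) (hodd : i % 2 = 1)
    {p1 p2 p3 p4} :
    B n i p1 p2 ≫ A n i p3 p4 = Dp (AObj.pos n) := by
  have h := CategoryTheory.Quotient.sound arel (ARel.αβ_δp n i h1 h2 hodd)
  rw [Functor.map_comp] at h
  exact h

lemma rαβδm {n i : ℕ} (h1 : 1 ≤ i) (h2 : i ≤ 2 * n + 4) (heven : i % 2 = 0)
    {p1 p2 p3 p4} :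
    B n i p1 p2 ≫ A n i p3 p4 = Dm (AObj.pos n) := by
  have h := CategoryTheory.Quotient.sound arel (ARel.αβ_δm n i h1 h2 heven)
  rw [Functor.map_comp] at h
  exact h

lemma Dp_central {a b : APath} (p : a ⟶ b) :
    (Quotient.functor arel).map p ≫ (Quotient.functor arel).map (pδp b) =
      (Quotient.functor arel).map (pδp a) ≫ (Quotient.functor arel).map p := by
  change @Quiver.Path AObj _ a b at p
  induction p with
  | nil =>
    have hid : (Quotient.functor arel).map (Quiver.Path.nil : a ⟶ a) =
        𝟙 ((Quotient.functor arel).obj a) := (Quotient.functor arel).map_id a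
    erw [hid, Category.id_comp]
  | cons p e ih =>
    rename_i b' c'
    have hsplit : (Quotient.functor arel).map (Quiver.Path.cons p e) =
        (Quotient.functor arel).map p ≫ (Quotient.functor arel).map (Quiver.Hom.toPath e) :=
      (Quotient.functor arel).map_comp p (Quiver.Hom.toPath e)
    erw [hsplit, Category.assoc]
    have hg := CategoryTheory.Quotient.sound arel (ARel.δp_comm e)
    erw [Functor.map_comp, Functor.map_comp] at hg
    erw [← hg, ← Category.assoc, ih, Category.assoc]

lemma Dm_central {a b : APath} (p : a ⟶ b) :
    (Quotient.functor arel).map p ≫ (Quotient.functor arel).map (pδm b) =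
      (Quotient.functor arel).map (pδm a) ≫ (Quotient.functor arel).map p := by
  change @Quiver.Path AObj _ a b at p
  induction p with
  | nil =>
    have hid : (Quotient.functor arel).map (Quiver.Path.nil : a ⟶ a) =
        𝟙 ((Quotient.functor arel).obj a) := (Quotient.functor arel).map_id a
    erw [hid, Category.id_comp]
  | cons p e ih =>
    rename_i b' c'
    have hsplit : (Quotient.functor arel).map (Quiver.Path.cons p e) =
        (Quotient.functor arel).map p ≫ (Quotient.functor arel).map (Quiver.Hom.toPath e) :=
      (Quotient.functor arel).map_comp p (Quiver.Hom.toPath e)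
    erw [hsplit, Category.assoc]
    have hg := CategoryTheory.Quotient.sound arel (ARel.δm_comm e)
    erw [Functor.map_comp, Functor.map_comp] at hg
    erw [← hg, ← Category.assoc, ih, Category.assoc]


/-! ### The star map on generators and the induced functor on paths -/

/-- The image of each generator under the involution `*`, as a path (in reverse direction). -/
def sg : ∀ {X Y : AObj}, AGen X Y → ((Paths.of AObj).obj Y ⟶ (Paths.of AObj).obj X)
  | _, _, AGen.a1 => pb1
  | _, _, AGen.a2 => pb2
  | _, _, AGen.α n i h1 h2 => pβ n i h1 h2
  | _, _, AGen.b1 => pa1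
  | _, _, AGen.b2 => pa2
  | _, _, AGen.β n i h1 h2 => pα n i h1 h2
  | _, _, AGen.τ n => pτpow n n
  | _, _, AGen.δp X => pδp X
  | _, _, AGen.δm X => pδm X

/-- The involution as a prefunctor `AObj ⥤q Annᵒᵖ`. -/
def Φ : AObj ⥤q Annᵒᵖ where
  obj X := Opposite.op ((Quotient.functor arel).obj ((Paths.of AObj).obj X))
  map g := ((Quotient.functor arel).map (sg g)).op

/-- The involution on the path category. -/
def F₀ : APath ⥤ Annᵒᵖ := Paths.lift Φ

lemma F₀_toPath {X Y : AObj} (g : AGen X Y) :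
    F₀.map (Quiver.Hom.toPath g) = ((Quotient.functor arel).map (sg g)).op :=
  Paths.lift_toPath Φ g

lemma F₀_α (n i : ℕ) (h1 : 1 ≤ i) (h2 : i ≤ 2 * n + 4) :
    F₀.map (pα n i h1 h2) = (B n i h1 h2).op := F₀_toPath _

lemma F₀_β (n i : ℕ) (h1 : 1 ≤ i) (h2 : i ≤ 2 * n + 4) :
    F₀.map (pβ n i h1 h2) = (A n i h1 h2).op := F₀_toPath _

lemma F₀_a1 : F₀.map pa1 = B1.op := F₀_toPath _
lemma F₀_a2 : F₀.map pa2 = B2.op := F₀_toPath _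
lemma F₀_b1 : F₀.map pb1 = A1.op := F₀_toPath _
lemma F₀_b2 : F₀.map pb2 = A2.op := F₀_toPath _
lemma F₀_τ (n : ℕ) : F₀.map (pτ n) = (Tpow n n).op := F₀_toPath _
lemma F₀_δp (X : AObj) : F₀.map (pδp X) = (Dp X).op := F₀_toPath _
lemma F₀_δm (X : AObj) : F₀.map (pδm X) = (Dm X).op := F₀_toPath _

lemma F₀_τpow (n k : ℕ) : F₀.map (pτpow n k) = (Tpow n (n * k)).op := by
  induction k with
  | zero =>
    have : F₀.map (pτpow n 0) = 𝟙 (F₀.obj (po n)) := F₀.map_id (po n)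
    rw [this, Tpow_congr n (Nat.mul_zero n), Tpow_zero]
    rfl
  | succ k ih =>
    erw [pτpow, F₀.map_comp, ih, F₀_τ, ← op_comp, ← Tpow_add,
      Tpow_congr n (show n + n * k = n * (k + 1) by ring)]

/-! ### `F₀` respects the relations -/

lemma preserve : ∀ (X Y : APath) (f g : X ⟶ Y), arel f g → F₀.map f = F₀.map g := by
  intro X Y f g hrel
  have h : ARel f g := hrel
  cases h with
  | αα n i j h1 hij hj hne =>
    erw [F₀.map_comp, F₀.map_comp, F₀_α, F₀_α, F₀_α, F₀_α, ← op_comp, ← op_comp]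
    exact congrArg Quiver.Hom.op
      (rββ (n := n) (i := i) (j := j - 2) h1 (by omega) (by omega) (by omega) (by omega)).symm
  | αα1 =>
    erw [F₀.map_comp, F₀.map_comp, F₀_α, F₀_α, F₀_a1, ← op_comp, ← op_comp]
    exact congrArg Quiver.Hom.op rββ1.symm
  | αα2 =>
    erw [F₀.map_comp, F₀.map_comp, F₀_α, F₀_α, F₀_a2, ← op_comp, ← op_comp]
    exact congrArg Quiver.Hom.op rββ2.symm
  | ββ n i j h1 hij hj hne =>
    erw [F₀.map_comp, F₀.map_comp, F₀_β, F₀_β, F₀_β, F₀_β, ← op_comp, ← op_comp]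
    exact congrArg Quiver.Hom.op
      (rαα (n := n) (i := i) (j := j + 2) h1 (by omega) (by omega) (by omega) (by omega)).symm
  | ββ1 =>
    erw [F₀.map_comp, F₀.map_comp, F₀_β, F₀_β, F₀_b1, ← op_comp, ← op_comp]
    exact congrArg Quiver.Hom.op rαα1.symm
  | ββ2 =>
    erw [F₀.map_comp, F₀.map_comp, F₀_β, F₀_β, F₀_b2, ← op_comp, ← op_comp]
    exact congrArg Quiver.Hom.op rαα2.symm
  | τpow n =>
    rw [F₀_τpow, F₀.map_id, Tpow_mul_period]
    exact op_id
  | ατ n i h1 h2 =>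
    erw [F₀.map_comp, F₀_α, F₀_τ, ← op_comp, F₀.map_comp, F₀_α, F₀_τ, ← op_comp]
    refine congrArg Quiver.Hom.op ?_
    apply cancel_T_right (n := n + 1)
    rw [Category.assoc, ← Tpow_succ, Tpow_period, Category.comp_id,
      Category.assoc, ← rβτ (n := n) (i := i) h1 h2 rfl, ← Category.assoc,
      ← Tpow_succ, Tpow_period, Category.id_comp]
  | βτ n i h1 h2 =>
    erw [F₀.map_comp, F₀_β, F₀_τ, ← op_comp, F₀.map_comp, F₀_β, F₀_τ, ← op_comp]
    refine congrArg Quiver.Hom.op ?_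
    apply cancel_T_right (n := n)
    rw [Category.assoc, ← Tpow_succ, Tpow_period, Category.comp_id,
      Category.assoc, ← rατ (n := n) (i := i) h1 h2 rfl, ← Category.assoc,
      ← Tpow_succ, Tpow_period, Category.id_comp]
  | δp0 =>
    erw [F₀.map_comp, F₀_a1, F₀_b1, F₀_δp, ← op_comp]
    exact congrArg Quiver.Hom.op rδp0
  | δm0 =>
    erw [F₀.map_comp, F₀_a2, F₀_b2, F₀_δm, ← op_comp]
    exact congrArg Quiver.Hom.op rδm0
  | αβ_τinv n =>
    erw [F₀.map_comp, F₀_α, F₀_β, ← op_comp, F₀_τpow]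
    refine congrArg Quiver.Hom.op ?_
    rw [rαβτ n]
    exact (Tnn n).symm
  | αβ_lt n i j h1 hij hj hne =>
    erw [F₀.map_comp, F₀.map_comp, F₀_α, F₀_β, F₀_α, F₀_β, ← op_comp, ← op_comp]
    exact congrArg Quiver.Hom.op (rαβgt (n := n) (i := j) (j := i) h1 (by omega) hj
      (by omega) rfl)
  | αβ_lt1 =>
    erw [F₀.map_comp, F₀.map_comp, F₀_α, F₀_β, F₀_a1, F₀_b1, ← op_comp, ← op_comp]
    exact congrArg Quiver.Hom.op rαβgt1
  | αβ_lt2 =>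
    erw [F₀.map_comp, F₀.map_comp, F₀_α, F₀_β, F₀_a2, F₀_b2, ← op_comp, ← op_comp]
    exact congrArg Quiver.Hom.op rαβgt2
  | αβ_id1 n i h1 h2 =>
    erw [F₀.map_comp, F₀_α, F₀_β, ← op_comp, F₀.map_id]
    rw [rαβid2 (n := n) (j := i) h1 h2 rfl]
    exact op_id
  | αβ_id2 n j h1 h2 =>
    erw [F₀.map_comp, F₀_α, F₀_β, ← op_comp, F₀.map_id]
    rw [rαβid1 (n := n) (i := j) h1 h2 rfl]
    exact op_id
  | αβ_δp n i h1 h2 hodd =>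
    erw [F₀.map_comp, F₀_α, F₀_β, ← op_comp, F₀_δp]
    exact congrArg Quiver.Hom.op (rαβδp h1 h2 hodd)
  | αβ_δm n i h1 h2 heven =>
    erw [F₀.map_comp, F₀_α, F₀_β, ← op_comp, F₀_δm]
    exact congrArg Quiver.Hom.op (rαβδm h1 h2 heven)
  | αβ_gt n i j h1 hij hi hne =>
    erw [F₀.map_comp, F₀.map_comp, F₀_α, F₀_β, F₀_α, F₀_β, ← op_comp, ← op_comp]
    exact congrArg Quiver.Hom.op (rαβlt (n := n) (i := j) (j := i) h1 (by omega) hi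
      (by omega) rfl)
  | αβ_gt1 =>
    erw [F₀.map_comp, F₀.map_comp, F₀_α, F₀_β, F₀_a1, F₀_b1, ← op_comp, ← op_comp]
    exact congrArg Quiver.Hom.op rαβlt1
  | αβ_gt2 =>
    erw [F₀.map_comp, F₀.map_comp, F₀_α, F₀_β, F₀_a2, F₀_b2, ← op_comp, ← op_comp]
    exact congrArg Quiver.Hom.op rαβlt2
  | αβ_τ n =>
    erw [F₀.map_comp, F₀_α, F₀_β, ← op_comp, F₀_τ]
    exact congrArg Quiver.Hom.op (rαβτinv n)
  | δp_comm g =>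
    erw [F₀.map_comp, F₀.map_comp, F₀_toPath g, F₀_δp, F₀_δp, ← op_comp, ← op_comp]
    have hc : (Quotient.functor arel).map (sg g) ≫ Dp _ = Dp _ ≫ (Quotient.functor arel).map (sg g) :=
      Dp_central (sg g)
    exact congrArg Quiver.Hom.op hc
  | δm_comm g =>
    erw [F₀.map_comp, F₀.map_comp, F₀_toPath g, F₀_δm, F₀_δm, ← op_comp, ← op_comp]
    have hc : (Quotient.functor arel).map (sg g) ≫ Dm _ = Dm _ ≫ (Quotient.functor arel).map (sg g) :=
      Dm_central (sg g)
    exact congrArg Quiver.Hom.op hc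

/-! ### The involution functor and its properties -/

/-- The involution `* : aΔ ⥤ aΔᵒᵖ`. -/
def Finv : Ann ⥤ Annᵒᵖ := CategoryTheory.Quotient.lift arel F₀ preserve

lemma Finv_map_q {X Y : APath} (p : X ⟶ Y) :
    Finv.map ((Quotient.functor arel).map p) = F₀.map p :=
  CategoryTheory.Quotient.lift_map_functor_map arel F₀ preserve p

lemma Finv_A (n i : ℕ) (h1 : 1 ≤ i) (h2 : i ≤ 2 * n + 4) :
    Finv.map (A n i h1 h2) = (B n i h1 h2).op := by
  erw [show A n i h1 h2 = (Quotient.functor arel).map (pα n i h1 h2) from rfl, Finv_map_q, F₀_α]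

lemma Finv_B (n i : ℕ) (h1 : 1 ≤ i) (h2 : i ≤ 2 * n + 4) :
    Finv.map (B n i h1 h2) = (A n i h1 h2).op := by
  erw [show B n i h1 h2 = (Quotient.functor arel).map (pβ n i h1 h2) from rfl, Finv_map_q, F₀_β]

lemma Finv_A1 : Finv.map A1 = B1.op := by
  erw [show A1 = (Quotient.functor arel).map pa1 from rfl, Finv_map_q, F₀_a1]

lemma Finv_A2 : Finv.map A2 = B2.op := by
  erw [show A2 = (Quotient.functor arel).map pa2 from rfl, Finv_map_q, F₀_a2]

lemma Finv_B1 : Finv.map B1 = A1.op := by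
  erw [show B1 = (Quotient.functor arel).map pb1 from rfl, Finv_map_q, F₀_b1]

lemma Finv_B2 : Finv.map B2 = A2.op := by
  erw [show B2 = (Quotient.functor arel).map pb2 from rfl, Finv_map_q, F₀_b2]

lemma Finv_T (n : ℕ) : Finv.map (T n) = (Tpow n n).op := by
  erw [show T n = (Quotient.functor arel).map (pτ n) from rfl, Finv_map_q, F₀_τ]

lemma Finv_Dp (X : AObj) : Finv.map (Dp X) = (Dp X).op := by
  erw [show Dp X = (Quotient.functor arel).map (pδp X) from rfl, Finv_map_q, F₀_δp]; rfl

lemma Finv_Dm (X : AObj) : Finv.map (Dm X) = (Dm X).op := by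
  erw [show Dm X = (Quotient.functor arel).map (pδm X) from rfl, Finv_map_q, F₀_δm]; rfl

lemma key_gen {X Y : AObj} (e : AGen X Y) :
    Finv.leftOp.map (Finv.map ((Quotient.functor arel).map (Quiver.Hom.toPath e))) =
      (Quotient.functor arel).map (Quiver.Hom.toPath e) := by
  erw [Finv_map_q, F₀_toPath]
  show (Finv.map ((Quotient.functor arel).map (sg e))).unop = _
  rw [Finv_map_q]
  cases e with
  | a1 => simp only [sg]; erw [F₀_b1]; rfl
  | a2 => simp only [sg]; erw [F₀_b2]; rfl
  | α n i h1 h2 => simp only [sg]; erw [F₀_β]; rfl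
  | b1 => simp only [sg]; erw [F₀_a1]; rfl
  | b2 => simp only [sg]; erw [F₀_a2]; rfl
  | β n i h1 h2 => simp only [sg]; erw [F₀_α]; rfl
  | τ n => simp only [sg]; erw [F₀_τpow]; exact Tnn n
  | δp X => simp only [sg]; erw [F₀_δp]; rfl
  | δm X => simp only [sg]; erw [F₀_δm]; rfl

lemma key_path : ∀ {a b : APath} (p : a ⟶ b),
    Finv.leftOp.map (Finv.map ((Quotient.functor arel).map p)) =
      (Quotient.functor arel).map p := by
  intro a b p
  change @Quiver.Path AObj _ a b at p
  induction p with
  | nil =>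
    have hid : (Quotient.functor arel).map (Quiver.Path.nil : a ⟶ a) =
        𝟙 ((Quotient.functor arel).obj a) := (Quotient.functor arel).map_id a
    erw [hid]
  | cons p e ih =>
    rename_i b' c'
    have hsplit : (Quotient.functor arel).map (Quiver.Path.cons p e) =
        (Quotient.functor arel).map p ≫ (Quotient.functor arel).map (Quiver.Hom.toPath e) :=
      (Quotient.functor arel).map_comp p (Quiver.Hom.toPath e)
    erw [hsplit, Finv.map_comp, Finv.leftOp.map_comp, ih, key_gen]; rfl

lemma key : ∀ {A B : Ann} (g : A ⟶ B), Finv.leftOp.map (Finv.map g) = g := by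
  apply CategoryTheory.Quotient.induction
  intro x y f
  exact key_path f

end AnnularCat

open AnnularCat
/-- The assignment `* : aΔ → aΔ` fixing objects, sending `α_i ↦ β_i`, `β_i ↦ α_i`,
`τ ↦ τ⁻¹ (= τ^n on [n+1] = qo n)`, `δ± ↦ δ±`, and reversing words, is a well-defined
involution on `aΔ`: it is a contravariant functor `F : aΔ ⥤ aΔᵒᵖ` fixing all objects,
of period two (`F ⋙ F.leftOp = 𝟭` and `F.leftOp ⋙ F = 𝟭`, which in particular makes `F`
an isomorphism of categories `aΔ ≅ aΔᵒᵖ`), acting as prescribed on the generators. -/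
theorem annular_involution :
    ∃ (F : Ann ⥤ Annᵒᵖ) (hobj : ∀ X : Ann, F.obj X = Opposite.op X),
      F ⋙ F.leftOp = 𝟭 Ann ∧
      F.leftOp ⋙ F = 𝟭 Annᵒᵖ ∧
      (∀ (n i : ℕ) (h1 : 1 ≤ i) (h2 : i ≤ 2 * n + 4),
        F.map (A n i h1 h2) =
          eqToHom (hobj _) ≫ (B n i h1 h2).op ≫ eqToHom (hobj _).symm) ∧
      (∀ (n i : ℕ) (h1 : 1 ≤ i) (h2 : i ≤ 2 * n + 4),
        F.map (B n i h1 h2) =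
          eqToHom (hobj _) ≫ (A n i h1 h2).op ≫ eqToHom (hobj _).symm) ∧
      (F.map A1 = eqToHom (hobj _) ≫ B1.op ≫ eqToHom (hobj _).symm) ∧
      (F.map A2 = eqToHom (hobj _) ≫ B2.op ≫ eqToHom (hobj _).symm) ∧
      (F.map B1 = eqToHom (hobj _) ≫ A1.op ≫ eqToHom (hobj _).symm) ∧
      (F.map B2 = eqToHom (hobj _) ≫ A2.op ≫ eqToHom (hobj _).symm) ∧
      (∀ n : ℕ, F.map (T n) = eqToHom (hobj _) ≫ (Tpow n n).op ≫ eqToHom (hobj _).symm) ∧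
      (∀ X : AObj, F.map (Dp X) = eqToHom (hobj _) ≫ (Dp X).op ≫ eqToHom (hobj _).symm) ∧
      (∀ X : AObj, F.map (Dm X) = eqToHom (hobj _) ≫ (Dm X).op ≫ eqToHom (hobj _).symm) :=  by
  refine ⟨Finv, fun X => rfl, ?_, ?_, fun n i h1 h2 => ?_, fun n i h1 h2 => ?_, ?_, ?_, ?_, ?_,
    fun n => ?_, fun X => ?_, fun X => ?_⟩
  · -- `F ⋙ F.leftOp = 𝟭 aΔ`
    refine CategoryTheory.Functor.ext (fun X => rfl) (fun A B g => ?_)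
    simp only [Functor.comp_map, Functor.id_map, eqToHom_refl, Category.comp_id,
      Category.id_comp]
    erw [eqToHom_refl, eqToHom_refl, Category.comp_id, Category.id_comp]
    exact key g
  · -- `F.leftOp ⋙ F = 𝟭 aΔᵒᵖ`
    refine CategoryTheory.Functor.ext (fun X => rfl) (fun A B f => ?_)
    simp only [Functor.comp_map, Functor.id_map, eqToHom_refl, Category.comp_id,
      Category.id_comp]
    erw [eqToHom_refl, eqToHom_refl, Category.comp_id, Category.id_comp]
    have hk : (Finv.map ((Finv.map f.unop).unop)).unop = f.unop := key f.unop
    exact Quiver.Hom.unop_inj hk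
  · erw [eqToHom_refl, eqToHom_refl, Category.comp_id, Category.id_comp]
    exact Finv_A n i h1 h2
  · erw [eqToHom_refl, eqToHom_refl, Category.comp_id, Category.id_comp]
    exact Finv_B n i h1 h2
  · erw [eqToHom_refl, eqToHom_refl, Category.comp_id, Category.id_comp]
    exact Finv_A1
  · erw [eqToHom_refl, eqToHom_refl, Category.comp_id, Category.id_comp]
    exact Finv_A2
  · erw [eqToHom_refl, eqToHom_refl, Category.comp_id, Category.id_comp]
    exact Finv_B1
  · erw [eqToHom_refl, eqToHom_refl, Category.comp_id, Category.id_comp]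
    exact Finv_B2
  · erw [eqToHom_refl, Category.comp_id, Category.id_comp]
    exact Finv_T n
  · erw [eqToHom_refl, Category.comp_id, Category.id_comp]
    exact Finv_Dp X
  · erw [eqToHom_refl, Category.comp_id, Category.id_comp]
    exact Finv_Dm X
end

section
/- Let X_• be an annular R-module (a functor from aΔ to R-modules with the sign convention). For each n ≥ 1, with b_+ = Σ_{i=0}^{n-1} (-1)^i α_{2i+1} : X_n → X_{n-1}, the identity β_1 b_+ + b_+ β_1 = δ_+ · id_{X_n} holds, where δ_+ denotes the action of the coupling constant on X_n. -/
open scoped BigOperators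

/-- An annular `R`-module (an annular object in `R`-modules, with the sign convention):
`M k` is the module attached to the object `[k+1]` of the annular category `aΔ`, and
`Xp`, `Xm` are attached to `[0+]` and `[0-]`.  The structure maps are
`α k i : M (k+1) →ₗ M k` for `1 ≤ i ≤ 2(k+2)` (with `α1 : M 0 →ₗ Xp`, `α2 : M 0 →ₗ Xm`),
`β k i : M k →ₗ M (k+1)` for `1 ≤ i ≤ 2(k+1)+2` (with `β1 : Xp →ₗ M 0`,
`β2 : Xm →ₗ M 0`), the (signed) rotation `τ k` with `τ^{k+1} = 1`, and the central
coupling constants `δ₊`, `δ₋`.  The relations are (1)-(7) of `aΔ` with the sign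
convention `(4')`, `(5')`, `(6')` for annular objects in an abelian category.
(For `[n] = M k` one has `n = k + 1`, so the bounds `2n+2` for `β`-indices and
`2(n+1)` for `α`-indices out of `[n+1]` both read `2k+4`.) -/
structure AnnularModule (R : Type*) [CommRing R] (M : ℕ → Type*) (Xp Xm : Type*)
    [∀ n, AddCommGroup (M n)] [∀ n, Module R (M n)]
    [AddCommGroup Xp] [Module R Xp] [AddCommGroup Xm] [Module R Xm] where
  α : ∀ n : ℕ, ℕ → (M (n + 1) →ₗ[R] M n)
  α1 : M 0 →ₗ[R] Xp
  α2 : M 0 →ₗ[R] Xm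
  β : ∀ n : ℕ, ℕ → (M n →ₗ[R] M (n + 1))
  β1 : Xp →ₗ[R] M 0
  β2 : Xm →ₗ[R] M 0
  τ : ∀ n : ℕ, M n →ₗ[R] M n
  δp : ∀ n : ℕ, M n →ₗ[R] M n
  δpp : Xp →ₗ[R] Xp
  δpm : Xm →ₗ[R] Xm
  δm : ∀ n : ℕ, M n →ₗ[R] M n
  δmp : Xp →ₗ[R] Xp
  δmm : Xm →ₗ[R] Xm
  -- (1)  α_i α_j = α_{j-2} α_i  for i < j - 1, (i,j) ≠ (1,2n)
  rel1 : ∀ n i j, 1 ≤ i → i < j - 1 → j ≤ 2 * n + 6 → ¬(i = 1 ∧ j = 2 * n + 6) →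
    α n i ∘ₗ α (n + 1) j = α n (j - 2) ∘ₗ α (n + 1) i
  rel1p : α1 ∘ₗ α 0 3 = α1 ∘ₗ α 0 1
  rel1m : α2 ∘ₗ α 0 4 = α2 ∘ₗ α 0 2
  -- (2)  β_i β_j = β_{j+2} β_i  for i ≤ j, (i,j) ≠ (1,2n+2)
  rel2 : ∀ n i j, 1 ≤ i → i ≤ j → j ≤ 2 * n + 4 → ¬(i = 1 ∧ j = 2 * n + 4) →
    β (n + 1) i ∘ₗ β n j = β (n + 1) (j + 2) ∘ₗ β n i
  rel2p : β 0 1 ∘ₗ β1 = β 0 3 ∘ₗ β1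
  rel2m : β 0 2 ∘ₗ β2 = β 0 4 ∘ₗ β2
  -- (3)  τ^n = id on [n]
  rel3 : ∀ n, (τ n : Module.End R (M n)) ^ (n + 1) = 1
  -- (4') α_i τ = -τ α_{i-2}  for i ≥ 3
  rel4 : ∀ n i, 3 ≤ i → i ≤ 2 * n + 4 →
    α n i ∘ₗ τ (n + 1) = -(τ n ∘ₗ α n (i - 2))
  -- (5') β_i τ = -τ β_{i-2}  for i ≥ 3
  rel5 : ∀ n i, 3 ≤ i → i ≤ 2 * n + 4 →
    β n i ∘ₗ τ n = -(τ (n + 1) ∘ₗ β n (i - 2))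
  -- (6/6') the α_i β_j relations (with signs on the τ^{±1} cases)
  rel6_p : α1 ∘ₗ β1 = δpp
  rel6_m : α2 ∘ₗ β2 = δmm
  rel6_τinv : ∀ n, α n 1 ∘ₗ β n (2 * n + 4) =
    ((-1 : ℤ) ^ n) • (((τ n : Module.End R (M n)) ^ n : Module.End R (M n)) : M n →ₗ[R] M n)
  rel6_lt : ∀ n i j, 1 ≤ i → i < j - 1 → j ≤ 2 * n + 6 → ¬(i = 1 ∧ j = 2 * n + 6) →
    α (n + 1) i ∘ₗ β (n + 1) j = β n (j - 2) ∘ₗ α n i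
  rel6_ltp : α 0 1 ∘ₗ β 0 3 = β1 ∘ₗ α1
  rel6_ltm : α 0 2 ∘ₗ β 0 4 = β2 ∘ₗ α2
  rel6_id1 : ∀ n i, 1 ≤ i → i + 1 ≤ 2 * n + 4 → α n i ∘ₗ β n (i + 1) = LinearMap.id
  rel6_id2 : ∀ n j, 1 ≤ j → j + 1 ≤ 2 * n + 4 → α n (j + 1) ∘ₗ β n j = LinearMap.id
  rel6_δp : ∀ n i, 1 ≤ i → i ≤ 2 * n + 4 → i % 2 = 1 → α n i ∘ₗ β n i = δp n
  rel6_δm : ∀ n i, 1 ≤ i → i ≤ 2 * n + 4 → i % 2 = 0 → α n i ∘ₗ β n i = δm n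
  rel6_gt : ∀ n i j, 1 ≤ j → j + 1 < i → i ≤ 2 * n + 6 → ¬(i = 2 * n + 6 ∧ j = 1) →
    α (n + 1) i ∘ₗ β (n + 1) j = β n j ∘ₗ α n (i - 2)
  rel6_gtp : α 0 3 ∘ₗ β 0 1 = β1 ∘ₗ α1
  rel6_gtm : α 0 4 ∘ₗ β 0 2 = β2 ∘ₗ α2
  rel6_τ : ∀ n, α n (2 * n + 4) ∘ₗ β n 1 = ((-1 : ℤ) ^ n) • τ n
  -- (7) δ₊ and δ₋ commute with all generators
  rel7_pα : ∀ n i, δp n ∘ₗ α n i = α n i ∘ₗ δp (n + 1)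
  rel7_pβ : ∀ n i, δp (n + 1) ∘ₗ β n i = β n i ∘ₗ δp n
  rel7_pτ : ∀ n, δp n ∘ₗ τ n = τ n ∘ₗ δp n
  rel7_pα1 : δpp ∘ₗ α1 = α1 ∘ₗ δp 0
  rel7_pα2 : δpm ∘ₗ α2 = α2 ∘ₗ δp 0
  rel7_pβ1 : δp 0 ∘ₗ β1 = β1 ∘ₗ δpp
  rel7_pβ2 : δp 0 ∘ₗ β2 = β2 ∘ₗ δpm
  rel7_mα : ∀ n i, δm n ∘ₗ α n i = α n i ∘ₗ δm (n + 1)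
  rel7_mβ : ∀ n i, δm (n + 1) ∘ₗ β n i = β n i ∘ₗ δm n
  rel7_mτ : ∀ n, δm n ∘ₗ τ n = τ n ∘ₗ δm n
  rel7_mα1 : δmp ∘ₗ α1 = α1 ∘ₗ δm 0
  rel7_mα2 : δmm ∘ₗ α2 = α2 ∘ₗ δm 0
  rel7_mβ1 : δm 0 ∘ₗ β1 = β1 ∘ₗ δmp
  rel7_mβ2 : δm 0 ∘ₗ β2 = β2 ∘ₗ δmm
  rel7_pm : ∀ n, δp n ∘ₗ δm n = δm n ∘ₗ δp n
  rel7_pmp : δpp ∘ₗ δmp = δmp ∘ₗ δpp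
  rel7_pmm : δpm ∘ₗ δmm = δmm ∘ₗ δpm

namespace AnnularModule

variable {R : Type*} [CommRing R] {M : ℕ → Type*} {Xp Xm : Type*}
  [∀ n, AddCommGroup (M n)] [∀ n, Module R (M n)]
  [AddCommGroup Xp] [Module R Xp] [AddCommGroup Xm] [Module R Xm]

/-- The `(+)`-Hochschild boundary `b₊ = Σ_{i=0}^{n-1} (-1)^i α_{2i+1} : X_n → X_{n-1}`
for `n ≥ 2`; here `X_n = M (k+1)` with `n = k + 2`. -/
def bplus (X : AnnularModule R M Xp Xm) (k : ℕ) : M (k + 1) →ₗ[R] M k :=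
  ∑ i ∈ Finset.range (k + 2), ((-1 : ℤ) ^ i) • X.α k (2 * i + 1)

end AnnularModule

private lemma sum_comp_aux {R : Type*} [CommRing R] {A B C : Type*}
    [AddCommGroup A] [Module R A] [AddCommGroup B] [Module R B]
    [AddCommGroup C] [Module R C] (s : Finset ℕ) (f : ℕ → (B →ₗ[R] C)) (g : A →ₗ[R] B) :
    (∑ i ∈ s, f i) ∘ₗ g = ∑ i ∈ s, f i ∘ₗ g := by
  ext x
  simp [LinearMap.comp_apply, Finset.sum_apply]

/-- For an annular `R`-module `X`, for each `n ≥ 1` the identity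
`β₁ b₊ + b₊ β₁ = δ₊ · id` holds on `X_n`: in degree `1` (`X_1 = M 0`, where
`b₊ = α₁ : X_1 → X_+`) this reads `β1 ∘ α1 + b₊ ∘ β₁ = δ₊`, and in degree `n = k + 2`
(`X_n = M (k+1)`) it reads `β₁ ∘ b₊ + b₊ ∘ β₁ = δ₊`. -/
theorem beta_one_bplus_homotopy {R : Type*} [CommRing R] {M : ℕ → Type*} {Xp Xm : Type*}
    [∀ n, AddCommGroup (M n)] [∀ n, Module R (M n)]
    [AddCommGroup Xp] [Module R Xp] [AddCommGroup Xm] [Module R Xm]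
    (X : AnnularModule R M Xp Xm) :
    (X.β1 ∘ₗ X.α1 + X.bplus 0 ∘ₗ X.β 0 1 = X.δp 0) ∧
    (∀ k : ℕ, X.β k 1 ∘ₗ X.bplus k + X.bplus (k + 1) ∘ₗ X.β (k + 1) 1 = X.δp (k + 1)) := by
  constructor
  · have h1 := X.rel6_δp 0 1 le_rfl (by norm_num) rfl
    have h2 := X.rel6_gtp
    simp only [AnnularModule.bplus, Finset.sum_range_succ, Finset.sum_range_zero,
      zero_add, pow_zero, pow_one, one_smul, neg_smul]
    rw [LinearMap.add_comp, LinearMap.neg_comp, h1, h2]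
    abel
  · intro k
    have key : ∀ i, i < k + 2 →
        X.α (k + 1) (2 * (i + 1) + 1) ∘ₗ X.β (k + 1) 1 = X.β k 1 ∘ₗ X.α k (2 * i + 1) := by
      intro i hi
      have h := X.rel6_gt k (2 * (i + 1) + 1) 1 le_rfl (by omega) (by omega) (by omega)
      have h2 : 2 * (i + 1) + 1 - 2 = 2 * i + 1 := by omega
      rwa [h2] at h
    have h0 := X.rel6_δp (k + 1) 1 le_rfl (by omega) rfl
    have hc : X.β k 1 ∘ₗ (∑ i ∈ Finset.range (k + 2), ((-1 : ℤ) ^ i) • X.α k (2 * i + 1))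
        = ∑ i ∈ Finset.range (k + 2), ((-1 : ℤ) ^ i) • (X.β k 1 ∘ₗ X.α k (2 * i + 1)) := by
      ext x
      simp only [LinearMap.comp_apply, LinearMap.coe_sum, Finset.sum_apply, map_sum,
        map_zsmul, LinearMap.smul_apply]
    have h2 : X.bplus (k + 1) ∘ₗ X.β (k + 1) 1
        = X.δp (k + 1) - X.β k 1 ∘ₗ X.bplus k := by
      simp only [AnnularModule.bplus]
      rw [sum_comp_aux, Finset.sum_range_succ']
      simp only [LinearMap.smul_comp, pow_zero, one_smul]
      rw [h0, Finset.sum_congr rfl (fun i hi => by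
        rw [key i (Finset.mem_range.mp hi)]), hc,
        Finset.sum_congr rfl (fun i (_ : i ∈ Finset.range (k + 2)) => by
          rw [pow_succ, mul_comm, neg_one_mul, neg_smul] :
          ∀ i ∈ Finset.range (k + 2), ((-1 : ℤ) ^ (i + 1)) • (X.β k 1 ∘ₗ X.α k (2 * i + 1))
            = -(((-1 : ℤ) ^ i) • (X.β k 1 ∘ₗ X.α k (2 * i + 1)))),
        Finset.sum_neg_distrib]
      abel
    rw [h2]
    abel
end

section
/- Let X_• be an annular R-module such that the coupling constant δ_+ acts on each X_n by multiplication by a unit u ∈ R^×. Then the Hochschild homology of the associated (+)-semi-simplicial module (with boundary b_+ = Σ_{i=0}^{n-1} (-1)^i α_{2i+1}) vanishes in all degrees: ker(b_+)/im(b_+) = 0 on X_n for all n ≥ 1. -/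
open scoped BigOperators

section Aux

variable {R : Type*} [CommRing R] {M : ℕ → Type*} {Xp Xm : Type*}
  [∀ n, AddCommGroup (M n)] [∀ n, Module R (M n)]
  [AddCommGroup Xp] [Module R Xp] [AddCommGroup Xm] [Module R Xm]

lemma homotopy_aux (X : AnnularModule R M Xp Xm) (k : ℕ) :
    X.bplus (k + 1) ∘ₗ X.β (k + 1) 1 = X.δp (k + 1) - X.β k 1 ∘ₗ X.bplus k := by
  apply LinearMap.ext; intro x
  simp only [AnnularModule.bplus, LinearMap.comp_apply, LinearMap.sum_apply,
    LinearMap.smul_apply, LinearMap.sub_apply, map_sum, map_zsmul]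
  rw [Finset.sum_range_succ']
  have h0 : X.α (k + 1) (2 * 0 + 1) (X.β (k + 1) 1 x) = X.δp (k + 1) x := by
    have := congrArg (fun f => f x) (X.rel6_δp (k + 1) 1 (by omega) (by omega) (by omega))
    simpa using this
  rw [h0]
  have hsum : ∀ i ∈ Finset.range (k + 2),
      ((-1 : ℤ) ^ (i + 1)) • X.α (k + 1) (2 * (i + 1) + 1) (X.β (k + 1) 1 x) =
      -(((-1 : ℤ) ^ i) • X.β k 1 (X.α k (2 * i + 1) x)) := by
    intro i hi
    simp only [Finset.mem_range] at hi
    have hg := X.rel6_gt k (2 * (i + 1) + 1) 1 (by omega) (by omega) (by omega) (by omega)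
    have h2 : 2 * (i + 1) + 1 - 2 = 2 * i + 1 := by omega
    rw [h2] at hg
    have := congrArg (fun f => f x) hg
    simp only [LinearMap.comp_apply] at this
    rw [this, pow_succ]
    simp [mul_comm, neg_smul]
  rw [Finset.sum_congr rfl hsum, Finset.sum_neg_distrib]
  simp only [pow_zero, one_smul]
  abel

end Aux

/-- If the coupling constant `δ₊` of an annular `R`-module acts on each `X_n` by
multiplication by a unit `u ∈ Rˣ`, then the Hochschild homology of the associated
`(+)`-semi-simplicial module vanishes in all degrees `n ≥ 1`:
`ker b₊ ⊆ im b₊` at `X_1 = M 0` (where `b₊ = α₁ : X_1 → X_+`)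
and at every `X_{k+2} = M (k+1)`. -/
theorem hochschild_vanishing {R : Type*} [CommRing R] {M : ℕ → Type*} {Xp Xm : Type*}
    [∀ n, AddCommGroup (M n)] [∀ n, Module R (M n)]
    [AddCommGroup Xp] [Module R Xp] [AddCommGroup Xm] [Module R Xm]
    (X : AnnularModule R M Xp Xm) (u : Rˣ)
    (hδ : ∀ k : ℕ, X.δp k = (u : R) • (LinearMap.id : M k →ₗ[R] M k)) :
    (∀ x : M 0, X.α1 x = 0 → ∃ y : M 1, X.bplus 0 y = x) ∧
    (∀ (k : ℕ) (x : M (k + 1)), X.bplus k x = 0 → ∃ y : M (k + 2), X.bplus (k + 1) y = x) := by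
  constructor
  · intro x hx
    refine ⟨((u⁻¹ : Rˣ) : R) • X.β 0 1 x, ?_⟩
    have hb : X.bplus 0 (X.β 0 1 x) = (u : R) • x := by
      unfold AnnularModule.bplus
      rw [Finset.sum_range_succ, Finset.sum_range_succ, Finset.sum_range_zero]
      have h1 := X.rel6_δp 0 1 (by omega) (by omega) (by omega)
      have h3 := X.rel6_gtp
      have e1 : X.α 0 1 (X.β 0 1 x) = (u : R) • x := by
        have := congrArg (fun f => f x) h1
        simpa [hδ 0] using this
      have e3 : X.α 0 3 (X.β 0 1 x) = 0 := by
        have := congrArg (fun f => f x) h3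
        simpa [hx] using this
      simp [e1, e3]
    rw [map_smul, hb, smul_smul]
    norm_cast
    simp
  · intro k x hx
    refine ⟨((u⁻¹ : Rˣ) : R) • X.β (k + 1) 1 x, ?_⟩
    have hb : X.bplus (k + 1) (X.β (k + 1) 1 x) = (u : R) • x := by
      have := congrArg (fun f => f x) (homotopy_aux X k)
      simpa [hδ (k + 1), hx] using this
    rw [map_smul, hb, smul_smul]
    norm_cast
    simp
end
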